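/- In a commutative semigroup (S,+), every central set is an essential CR-set, and every essential CR-set is a C-set. -/

import Mathlib

attribute [local instance] Ultrafilter.add Ultrafilter.addSemigroup

/-- `A` is combinatorially rich in the commutative semigroup `S`. -/
def CRSet {S : Type*} [AddCommMonoid S] (A : Set S) : Prop :=
  ∀ k : ℕ, ∃ r : ℕ, ∀ M : Fin r → Fin k → S,
    ∃ (a : S) (H : Finset (Fin r)), H.Nonempty ∧
      ∀ j : Fin k, a + ∑ t ∈ H, M t j ∈ A

/-- `A` is a J-set in `S`. -/
def JSet {S : Type*} [AddCommMonoid S] (A : Set S) : Prop :=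
  ∀ F : Finset (ℕ → S), ∃ (a : S) (H : Finset ℕ), H.Nonempty ∧
    ∀ f ∈ F, a + ∑ n ∈ H, f n ∈ A

/-- `p` lies in the smallest two-sided ideal `K(βS)`: for every `q`, `p ∈ βS + q + p`. -/
def InSmallestIdeal {S : Type*} [AddCommMonoid S] (p : Ultrafilter S) : Prop :=
  ∀ q : Ultrafilter S, ∃ r : Ultrafilter S, r + (q + p) = p

/-- `A` is central: there is an idempotent ultrafilter in `cl(A) ∩ K(βS)`. -/
def CentralSet {S : Type*} [AddCommMonoid S] (A : Set S) : Prop :=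
  ∃ p : Ultrafilter S, p + p = p ∧ InSmallestIdeal p ∧ A ∈ p

/-- `A` is an essential CR-set: there is an idempotent ultrafilter containing `A`
all of whose members are CR-sets (i.e. an idempotent in `cl(A) ∩ CR(S)`). -/
def EssentialCRSet {S : Type*} [AddCommMonoid S] (A : Set S) : Prop :=
  ∃ p : Ultrafilter S, p + p = p ∧ (∀ B ∈ p, CRSet B) ∧ A ∈ p

/-- `A` is a C-set: there is an idempotent ultrafilter containing `A`
all of whose members are J-sets (i.e. an idempotent in `cl(A) ∩ J(S)`). -/
def CSet {S : Type*} [AddCommMonoid S] (A : Set S) : Prop :=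
  ∃ p : Ultrafilter S, p + p = p ∧ (∀ B ∈ p, JSet B) ∧ A ∈ p

section Aux

variable {S : Type*} [AddCommMonoid S]

/-- Step 1: if `p ∈ K(βS)` and `A ∈ p`, then for every ultrafilter `q` there is an
`x` such that `{y | {z | x + y + z ∈ A} ∈ p} ∈ q`. -/
private lemma step1 {p : Ultrafilter S} (hp : InSmallestIdeal p) {A : Set S} (hA : A ∈ p)
    (q : Ultrafilter S) : ∃ x : S, {y : S | {z : S | x + y + z ∈ A} ∈ p} ∈ q := by
  obtain ⟨r, hr⟩ := hp q
  have h1 : A ∈ r + (q + p) := by rw [hr]; exact hA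
  have h2 : ∀ᶠ x in ↑r, ∀ᶠ y in ↑q, ∀ᶠ z in ↑p, x + (y + z) ∈ A := by
    have h0 : ∀ᶠ m in ↑(r + (q + p)), m ∈ A := h1
    rw [Ultrafilter.eventually_add] at h0
    refine h0.mono fun x hx => ?_
    rw [Ultrafilter.eventually_add] at hx
    exact hx
  obtain ⟨x, hx⟩ := h2.exists
  refine ⟨x, ?_⟩
  have h3 : ∀ᶠ y in ↑q, {z : S | x + y + z ∈ A} ∈ p := by
    refine hx.mono fun y hy => ?_
    have : ∀ᶠ z in ↑p, x + y + z ∈ A := hy.mono fun z hz => by rwa [← add_assoc] at hz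
    exact this
  exact h3

/-- Step 2: there is a finite `G` such that every `y` is covered. -/
private lemma step2 {p : Ultrafilter S} (hp : InSmallestIdeal p) {A : Set S} (hA : A ∈ p) :
    ∃ G : Finset S, ∀ y : S, ∃ t ∈ G, {z : S | t + y + z ∈ A} ∈ p := by
  by_contra hcon
  push_neg at hcon
  set N : S → Set S := fun t => {y | {z : S | t + y + z ∈ A} ∉ p} with hN
  have hne : Filter.NeBot (Filter.generate (Set.range N)) := by
    rw [Filter.generate_neBot_iff]
    intro t ht hfin
    haveI := hfin.to_subtype
    have hch : ∀ u : t, ∃ x : S, N x = (u : Set S) := fun u => ht u.2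
    choose f hf using hch
    obtain ⟨y, hy⟩ := hcon (Set.finite_range f).toFinset
    refine ⟨y, fun u hu => ?_⟩
    have h1 : N (f ⟨u, hu⟩) = u := hf ⟨u, hu⟩
    rw [← h1]
    have h2 : f ⟨u, hu⟩ ∈ (Set.finite_range f).toFinset := by
      simp [Set.Finite.mem_toFinset]
    exact hy _ h2
  obtain ⟨q, hq⟩ := Ultrafilter.exists_le (Filter.generate (Set.range N))
  obtain ⟨x, hx⟩ := step1 hp hA q
  have hNx : N x ∈ q := hq (Filter.mem_generate_of_mem (Set.mem_range_self x))
  have : {y : S | {z : S | x + y + z ∈ A} ∈ p}ᶜ ∈ q := hNx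
  exact (Ultrafilter.compl_mem_iff_notMem.mp this) hx

/-- Members of ultrafilters in the smallest ideal are piecewise syndetic. -/
private lemma ps_of_ideal {p : Ultrafilter S} (hp : InSmallestIdeal p) {A : Set S} (hA : A ∈ p) :
    ∃ G : Finset S, ∀ F : Finset S, ∃ z : S, ∀ y ∈ F, ∃ t ∈ G, t + y + z ∈ A := by
  obtain ⟨G, hG⟩ := step2 hp hA
  choose t ht htp using hG
  refine ⟨G, fun F => ?_⟩
  have hB : (⋂ y ∈ (F : Set S), {z : S | t y + y + z ∈ A}) ∈ p :=
    (Filter.biInter_mem F.finite_toSet).mpr fun y _ => htp y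
  obtain ⟨z, hz⟩ := Ultrafilter.nonempty_of_mem hB
  refine ⟨z, fun y hy => ⟨t y, ht y, ?_⟩⟩
  have := Set.mem_iInter₂.mp hz y (by exact_mod_cast hy)
  exact this

/-- Piecewise syndetic sets are combinatorially rich (via Hales–Jewett). -/
private lemma cr_of_ps {A : Set S}
    (h : ∃ G : Finset S, ∀ F : Finset S, ∃ z : S, ∀ y ∈ F, ∃ t ∈ G, t + y + z ∈ A) :
    CRSet A := by
  classical
  obtain ⟨G, hG⟩ := h
  intro k
  rcases Nat.eq_zero_or_pos k with hk | hk
  · subst hk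
    exact ⟨1, fun M => ⟨0, {0}, Finset.singleton_nonempty _, fun j => j.elim0⟩⟩
  obtain ⟨ι, ιinst, hHJ⟩ :=
    Combinatorics.Line.exists_mono_in_high_dimension (Fin k) {t : S // t ∈ G}
  refine ⟨Fintype.card ι, fun M => ?_⟩
  set e := Fintype.equivFin ι with he
  set N : ι → Fin k → S := fun i j => M (e i) j with hNdef
  set s : (ι → Fin k) → S := fun w => ∑ i, N i (w i) with hsdef
  obtain ⟨z, hz⟩ := hG (Finset.image s Finset.univ)
  have hz' : ∀ w : ι → Fin k, ∃ t, t ∈ G ∧ t + s w + z ∈ A := fun w => by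
    obtain ⟨t, htG, htA⟩ := hz (s w) (Finset.mem_image_of_mem s (Finset.mem_univ w))
    exact ⟨t, htG, htA⟩
  choose C hCG hCA using hz'
  obtain ⟨l, c, hc⟩ := hHJ fun w => (⟨C w, hCG w⟩ : {t : S // t ∈ G})
  set H0 : Finset ι := Finset.univ.filter (fun i => l.idxFun i = none) with hH0def
  have hH0 : H0.Nonempty := by
    obtain ⟨i, hi⟩ := l.proper
    exact ⟨i, by simp [hH0def, hi]⟩
  set j0 : Fin k := ⟨0, hk⟩
  set w0 : S := ∑ i ∈ Finset.univ.filter (fun i => ¬ l.idxFun i = none),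
    N i ((l.idxFun i).getD j0) with hw0def
  refine ⟨c.1 + w0 + z, H0.image e, hH0.image e, fun j => ?_⟩
  have hsum : ∑ t ∈ H0.image e, M t j = ∑ i ∈ H0, N i j :=
    Finset.sum_image (fun a _ b _ hab => e.injective hab)
  have hkey : s (⇑l j) = (∑ i ∈ H0, N i j) + w0 := by
    rw [hsdef]
    dsimp only
    simp only [Combinatorics.Line.coe_apply]
    rw [← Finset.sum_filter_add_sum_filter_not Finset.univ
      (fun i => l.idxFun i = none) (fun i => N i ((l.idxFun i).getD j))]
    congr 1
    · refine Finset.sum_congr rfl fun i hi => ?_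
      have hnone : l.idxFun i = none := (Finset.mem_filter.mp hi).2
      simp [hnone]
    · refine Finset.sum_congr rfl fun i hi => ?_
      have hns : ¬ l.idxFun i = none := (Finset.mem_filter.mp hi).2
      cases hli : l.idxFun i with
      | none => exact absurd hli hns
      | some b => simp
  have hA' := hCA (⇑l j)
  have hcc : C (⇑l j) = c.1 := congrArg Subtype.val (hc j)
  have heq : c.1 + w0 + z + ∑ i ∈ H0, N i j = C (⇑l j) + s (⇑l j) + z := by
    rw [hcc, hkey]; abel
  rw [hsum, heq]
  exact hA'

/-- CR-sets are J-sets. -/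
private lemma jset_of_crset {A : Set S} (h : CRSet A) : JSet A := by
  classical
  intro F
  obtain ⟨r, hr⟩ := h F.card
  set eq : ↥F ≃ Fin F.card := Fintype.equivFinOfCardEq (Fintype.card_coe F) with heq
  obtain ⟨a, H, hHne, hH⟩ := hr fun t j => (eq.symm j : ℕ → S) (t : ℕ)
  refine ⟨a, H.image Fin.val, hHne.image _, fun f hf => ?_⟩
  set j : Fin F.card := eq ⟨f, hf⟩ with hj
  have hg : ((eq.symm j : ↥F) : ℕ → S) = f := by rw [hj, Equiv.symm_apply_apply]
  have hs : ∑ n ∈ H.image Fin.val, f n = ∑ t ∈ H, (eq.symm j : ℕ → S) (t : ℕ) := by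
    rw [Finset.sum_image (fun a _ b _ hab => Fin.val_injective hab)]
    exact Finset.sum_congr rfl fun t _ => by rw [hg]
  rw [hs]
  exact hH j

end Aux

/-- central ⇒ essential CR-set ⇒ C-set. -/
theorem stmt13 {S : Type*} [AddCommMonoid S] :
    (∀ A : Set S, CentralSet A → EssentialCRSet A) ∧
    (∀ A : Set S, EssentialCRSet A → CSet A) := by
  constructor
  · rintro A ⟨p, hpp, hK, hAp⟩
    exact ⟨p, hpp, fun B hB => cr_of_ps (ps_of_ideal hK hB), hAp⟩
  · rintro A ⟨p, hpp, hCR, hAp⟩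
    exact ⟨p, hpp, fun B hB => jset_of_crset (hCR B hB), hAp⟩
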